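/- Convergence of discretized rough paths under Property (RIE): suppose X satisfies Property (RIE) relative to p ∈ (2,3) and (P^n), with canonical lift 𝕏_{s,t} = ∫_s^t X_u ⊗ dX_u − X_s ⊗ X_{s,t} and discretized lifts 𝕏^n_{s,t} = ∫_s^t X^n_{s,u} ⊗ dX^n_u. Then for any p' > p, ‖X^n − X‖_{p'} + ‖𝕏^n − 𝕏‖_{p'/2} → 0 as n → ∞, with the quantitative bound ‖X^n − X‖_{p'} + ‖𝕏^n − 𝕏‖_{p'/2} ≤ C (‖X^n − X‖_∞^{1−p/p'} + sup_{(s,t)∈Δ_T} |∫_s^t X^n_{s,u} ⊗ dX_u − 𝕏_{s,t}|^{1−p/p'}), where C depends only on p, p', |X_0| and w(0,T) for the control w in condition (iii) of Property (RIE). -/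

import Mathlib

open scoped ENNReal Classical
open Filter MeasureTheory ProbabilityTheory

noncomputable section

/-- The `p`-variation of a path `X` over `[0,T]`, as an extended nonnegative real:
`(sup over partitions of Σ ‖increment‖^p)^(1/p)`. -/
def epVar {E : Type*} [NormedAddCommGroup E] (X : ℝ → E) (p T : ℝ) : ℝ≥0∞ :=
  (⨆ (n : ℕ) (t : ℕ → ℝ) (_ : Monotone t) (_ : t 0 = 0) (_ : t n = T),
    ∑ i ∈ Finset.range n, ENNReal.ofReal (‖X (t (i + 1)) - X (t i)‖ ^ p)) ^ (1 / p)

/-- The `r`-variation of a two-parameter function `A` over `[0,T]`. -/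
def epVar2 {E : Type*} [NormedAddCommGroup E] (A : ℝ → ℝ → E) (r T : ℝ) : ℝ≥0∞ :=
  (⨆ (n : ℕ) (t : ℕ → ℝ) (_ : Monotone t) (_ : t 0 = 0) (_ : t n = T),
    ∑ i ∈ Finset.range n, ENNReal.ofReal (‖A (t i) (t (i + 1))‖ ^ r)) ^ (1 / r)

/-- Piecewise constant approximation of `X` along the partition `t 0 ≤ t 1 ≤ ... ≤ t N`. -/
def pcApprox {E : Type*} (X : ℝ → E) (N : ℕ) (t : ℕ → ℝ) (s : ℝ) : E :=
  X (t (Nat.findGreatest (fun k => t k ≤ s) N))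

/-- Tensor (outer) product of two Euclidean vectors, with the Frobenius (Euclidean) norm. -/
def tp2 {d e : ℕ} (v : EuclideanSpace ℝ (Fin d)) (w : EuclideanSpace ℝ (Fin e)) :
    EuclideanSpace ℝ (Fin d × Fin e) :=
  (WithLp.equiv 2 (Fin d × Fin e → ℝ)).symm (fun q => v q.1 * w q.2)

def tp {d : ℕ} (v w : EuclideanSpace ℝ (Fin d)) : EuclideanSpace ℝ (Fin d × Fin d) :=
  tp2 v w

/-- Clamping of `x` into the interval `[s,u]`. -/
def clamp (s u x : ℝ) : ℝ := max s (min x u)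

/-- The second-level lift `𝕏ⁿ_{s,u} = ∫_s^u (Xⁿ_r − Xⁿ_s) ⊗ dXⁿ_r` of a path `Xn` which is
piecewise constant along the partition `t`, written as a left-point Riemann-Stieltjes sum. -/
def pcLift {d : ℕ} (N : ℕ) (Xn : ℝ → EuclideanSpace ℝ (Fin d)) (t : ℕ → ℝ) (s u : ℝ) :
    EuclideanSpace ℝ (Fin d × Fin d) :=
  ∑ i ∈ Finset.range N,
    tp (Xn (clamp s u (t i)) - Xn s) (Xn (clamp s u (t (i + 1))) - Xn (clamp s u (t i)))

/-- The left-point Riemann sum `∫_0^u Xⁿ_r ⊗ dX_r = Σ_k X_{t_k} ⊗ (X_{t_{k+1}∧u} − X_{t_k∧u})`. -/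
def riemannSum {d : ℕ} (N : ℕ) (X : ℝ → EuclideanSpace ℝ (Fin d)) (t : ℕ → ℝ) (u : ℝ) :
    EuclideanSpace ℝ (Fin d × Fin d) :=
  ∑ k ∈ Finset.range N, tp (X (t k)) (X (min (t (k + 1)) u) - X (min (t k) u))

/-- The left-point Riemann sum `∫_s^u Xⁿ_{s,r} ⊗ dX_r`. -/
def mixedInt {d : ℕ} (N : ℕ) (X : ℝ → EuclideanSpace ℝ (Fin d)) (t : ℕ → ℝ) (s u : ℝ) :
    EuclideanSpace ℝ (Fin d × Fin d) :=
  ∑ i ∈ Finset.range N,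
    tp (pcApprox X N t (clamp s u (t i)) - pcApprox X N t s)
      (X (clamp s u (t (i + 1))) - X (clamp s u (t i)))

/-- A control function on the simplex `Δ_T`: nonnegative and superadditive. -/
def IsControl (T : ℝ) (w : ℝ → ℝ → ℝ) : Prop :=
  (∀ s t, 0 ≤ s → s ≤ t → t ≤ T → 0 ≤ w s t) ∧
  (∀ s u t, 0 ≤ s → s ≤ u → u ≤ t → t ≤ T → w s u + w u t ≤ w s t)

/-- Property (RIE) for a path `X` relative to `p ∈ (2,3)` and a sequence of partitions
`t n 0 ≤ ... ≤ t n (N n)` of `[0,T]` with vanishing mesh. -/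
structure PropertyRIE {d : ℕ} (p T : ℝ) (X : ℝ → EuclideanSpace ℝ (Fin d))
    (N : ℕ → ℕ) (t : ℕ → ℕ → ℝ) : Prop where
  mono : ∀ n, Monotone (t n)
  zero : ∀ n, t n 0 = 0
  top : ∀ n, t n (N n) = T
  mesh : ∀ ε > 0, ∃ m, ∀ n ≥ m, ∀ i < N n, t n (i + 1) - t n i < ε
  unif : TendstoUniformlyOn (fun n s => pcApprox X (N n) (t n) s) X atTop (Set.Icc 0 T)
  riemann : ∃ I : ℝ → EuclideanSpace ℝ (Fin d × Fin d),
    TendstoUniformlyOn (fun n u => riemannSum (N n) X (t n) u) I atTop (Set.Icc 0 T)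
  control : ∃ w : ℝ → ℝ → ℝ, IsControl T w ∧
    (∀ s u, 0 ≤ s → s ≤ u → u ≤ T → ‖X u - X s‖ ^ p ≤ w s u) ∧
    (∀ n, ∀ k ℓ : ℕ, k < ℓ → ℓ ≤ N n →
      ‖riemannSum (N n) X (t n) (t n ℓ) - riemannSum (N n) X (t n) (t n k) -
          tp (X (t n k)) (X (t n ℓ) - X (t n k))‖ ^ (p / 2) ≤ w (t n k) (t n ℓ))


section AuxLemmas
variable {d : ℕ}

lemma tp_apply (v w : EuclideanSpace ℝ (Fin d)) (q : Fin d × Fin d) :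
    tp v w q = v q.1 * w q.2 := rfl

lemma tp_sub_left (v v' w : EuclideanSpace ℝ (Fin d)) :
    tp (v - v') w = tp v w - tp v' w := by
  ext q; simp [tp, tp2, sub_mul]

lemma tp_sub_right (v w w' : EuclideanSpace ℝ (Fin d)) :
    tp v (w - w') = tp v w - tp v w' := by
  ext q; simp [tp, tp2, mul_sub]

lemma tp_zero_left (w : EuclideanSpace ℝ (Fin d)) : tp 0 w = 0 := by
  ext q; simp [tp, tp2]

lemma tp_zero_right (v : EuclideanSpace ℝ (Fin d)) : tp v 0 = 0 := by
  ext q; simp [tp, tp2]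

lemma tp_sum_right {ι : Type*} (s : Finset ι) (v : EuclideanSpace ℝ (Fin d))
    (w : ι → EuclideanSpace ℝ (Fin d)) :
    tp v (∑ i ∈ s, w i) = ∑ i ∈ s, tp v (w i) := by
  classical
  induction s using Finset.induction_on with
  | empty => simp [tp_zero_right]
  | insert _ _ h ih =>
    rw [Finset.sum_insert h, Finset.sum_insert h, ← ih]
    have : ∀ a b : EuclideanSpace ℝ (Fin d), tp v (a + b) = tp v a + tp v b := by
      intro a b; ext q; simp [tp, tp2, mul_add]
    exact this _ _

lemma norm_tp_le (v w : EuclideanSpace ℝ (Fin d)) : ‖tp v w‖ ≤ ‖v‖ * ‖w‖ := by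
  rw [EuclideanSpace.norm_eq, EuclideanSpace.norm_eq, EuclideanSpace.norm_eq]
  rw [← Real.sqrt_mul (by positivity)]
  apply Real.sqrt_le_sqrt
  have h1 : ∑ q : Fin d × Fin d, ‖tp v w q‖ ^ 2
      = ∑ q : Fin d × Fin d, ‖v q.1‖ ^ 2 * ‖w q.2‖ ^ 2 := by
    apply Finset.sum_congr rfl
    intro q _
    rw [tp_apply]
    simp [abs_mul, mul_pow]
  rw [h1, Fintype.sum_prod_type, Finset.sum_mul_sum]

def fgIdx (P : ℕ → ℝ) (K : ℕ) (s : ℝ) : ℕ := Nat.findGreatest (fun k => P k ≤ s) K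

variable {P : ℕ → ℝ} {K : ℕ} {T s : ℝ}

lemma fgIdx_le (s : ℝ) : fgIdx P K s ≤ K := Nat.findGreatest_le K

lemma fgIdx_spec (hP0 : P 0 = 0) (hs : 0 ≤ s) : P (fgIdx P K s) ≤ s :=
  Nat.findGreatest_spec (P := fun k => P k ≤ s) (Nat.zero_le K)
    (show P 0 ≤ s by rw [hP0]; exact hs)

lemma le_fgIdx {i : ℕ} (hiK : i ≤ K) (hi : P i ≤ s) : i ≤ fgIdx P K s :=
  Nat.le_findGreatest hiK hi

lemma fgIdx_lt {i : ℕ} (hiK : i ≤ K) (hgt : fgIdx P K s < i) : s < P i := by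
  by_contra h
  exact Nat.findGreatest_is_greatest hgt hiK (not_lt.mp h)

lemma fgIdx_mono {s s' : ℝ} (h : s ≤ s') : fgIdx P K s ≤ fgIdx P K s' :=
  Nat.findGreatest_mono (fun _ hn => le_trans hn h) le_rfl

lemma pcApprox_eq {E : Type*} (X : ℝ → E) (s : ℝ) :
    pcApprox X K P s = X (P (fgIdx P K s)) := rfl

lemma pcApprox_partition {E : Type*} (hP : Monotone P) (X : ℝ → E) {i : ℕ} (hiK : i ≤ K) :
    pcApprox X K P (P i) = X (P i) := by
  rw [pcApprox_eq]
  congr 1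
  exact le_antisymm
    (Nat.findGreatest_spec (P := fun k => P k ≤ P i) hiK (le_refl (P i)))
    (hP (le_fgIdx hiK le_rfl))

lemma clamp_of_le {s u x : ℝ} (hsu : s ≤ u) (h : x ≤ s) : clamp s u x = s :=
  max_eq_left (le_trans (min_le_left x u) h)

lemma clamp_of_ge {s u x : ℝ} (hsu : s ≤ u) (h : u ≤ x) : clamp s u x = u := by
  unfold clamp; rw [min_eq_right h, max_eq_right hsu]

lemma clamp_of_mem {s u x : ℝ} (h1 : s ≤ x) (h2 : x ≤ u) : clamp s u x = x := by
  unfold clamp; rw [min_eq_left h2, max_eq_right h1]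

/-- `X (clamp a' b' a) - X a' = X (min a b') - X (min a a')` for `a' ≤ b'`. -/
lemma clamp_min_identity {E : Type*} [AddCommGroup E] (X : ℝ → E) {a' b' : ℝ} (h : a' ≤ b')
    (a : ℝ) : X (clamp a' b' a) - X a' = X (min a b') - X (min a a') := by
  rcases le_or_gt a a' with h1 | h1
  · rw [clamp_of_le h h1, min_eq_left (le_trans h1 h), min_eq_left h1, sub_self, sub_self]
  rcases le_or_gt a b' with h2 | h2
  · rw [clamp_of_mem h1.le h2, min_eq_left h2, min_eq_right h1.le]
  · rw [clamp_of_ge h h2.le, min_eq_right h2.le, min_eq_right (lt_of_le_of_lt h h2).le]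

section Identities
variable {d : ℕ}

/-- `Xⁿ(clamp s u (P i)) = X (clamp (P k) (P l) (P i))` for `i ≤ K`. -/
lemma pcApprox_clamp (X : ℝ → EuclideanSpace ℝ (Fin d)) (hP : Monotone P) (hP0 : P 0 = 0)
    (hs : 0 ≤ s) (hsu : s ≤ u) {i : ℕ} (hiK : i ≤ K) :
    pcApprox X K P (clamp s u (P i)) =
      X (clamp (P (fgIdx P K s)) (P (fgIdx P K u)) (P i)) := by
  set k := fgIdx P K s with hk
  set l := fgIdx P K u with hl
  have hks : P k ≤ s := fgIdx_spec hP0 hs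
  have hlu : P l ≤ u := fgIdx_spec hP0 (le_trans hs hsu)
  have hkl : P k ≤ P l := hP (fgIdx_mono hsu)
  rcases le_or_gt (P i) s with h1 | h1
  · have hik : i ≤ k := le_fgIdx hiK h1
    rw [clamp_of_le hsu h1, clamp_of_le hkl (hP hik), pcApprox_eq]
  rcases le_or_gt u (P i) with h2 | h2
  · have : P l ≤ P i := le_trans hlu h2
    rw [clamp_of_ge hsu h2, clamp_of_ge hkl this, pcApprox_eq]
  · have hil : i ≤ l := le_fgIdx hiK h2.le
    have hki : P k ≤ P i := le_trans hks h1.le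
    rw [clamp_of_mem h1.le h2.le, clamp_of_mem hki (hP hil),
      pcApprox_partition hP X hiK]

/-- `Σ_i tp (X (P i)) (X(clamp a b P(i+1)) − X(clamp a b P i)) = R b − R a`. -/
lemma sum_tp_clamp (X : ℝ → EuclideanSpace ℝ (Fin d)) {a b : ℝ} (hab : a ≤ b) :
    ∑ i ∈ Finset.range K,
        tp (X (P i)) (X (clamp a b (P (i+1))) - X (clamp a b (P i)))
      = riemannSum K X P b - riemannSum K X P a := by
  unfold riemannSum
  rw [← Finset.sum_sub_distrib]
  apply Finset.sum_congr rfl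
  intro i _
  rw [← tp_sub_right]
  congr 1
  have e1 : X (clamp a b (P (i+1))) - X (clamp a b (P i))
      = (X (clamp a b (P (i+1))) - X a) - (X (clamp a b (P i)) - X a) := by abel
  rw [e1, clamp_min_identity X hab, clamp_min_identity X hab]
  abel

/-- telescoping: `Σ_i tp v (X(clamp a b P(i+1)) − X(clamp a b P i)) = tp v (X b − X a)`. -/
lemma sum_tp_clamp_const (X : ℝ → EuclideanSpace ℝ (Fin d)) (hP0 : P 0 = 0) (hPK : P K = T)
    {a b : ℝ} (ha : 0 ≤ a) (hab : a ≤ b) (hbT : b ≤ T) (v : EuclideanSpace ℝ (Fin d)) :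
    ∑ i ∈ Finset.range K, tp v (X (clamp a b (P (i+1))) - X (clamp a b (P i)))
      = tp v (X b - X a) := by
  rw [← tp_sum_right]
  congr 1
  rw [Finset.sum_range_sub (fun j => X (clamp a b (P j)))]
  rw [hP0, hPK, clamp_of_le hab ha, clamp_of_ge hab hbT]

/-- Identity (b): `mixedInt s u = R u − R s − tp (X (P k)) (X u − X s)`. -/
lemma mixedInt_eq (X : ℝ → EuclideanSpace ℝ (Fin d)) (hP : Monotone P) (hP0 : P 0 = 0)
    (hPK : P K = T) (hs : 0 ≤ s) (hsu : s ≤ u) (huT : u ≤ T) :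
    mixedInt K X P s u = riemannSum K X P u - riemannSum K X P s
      - tp (X (P (fgIdx P K s))) (X u - X s) := by
  set k := fgIdx P K s with hk
  have hks : P k ≤ s := fgIdx_spec hP0 hs
  have step1 : mixedInt K X P s u =
      ∑ i ∈ Finset.range K, tp (X (P i) - X (P k))
        (X (clamp s u (P (i+1))) - X (clamp s u (P i))) := by
    apply Finset.sum_congr rfl
    intro i hi
    have hi1K : i + 1 ≤ K := Finset.mem_range.mp hi
    have hiK : i ≤ K := le_of_lt (Finset.mem_range.mp hi)
    rcases le_or_gt (P i) s with h1 | h1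
    · have hik : i ≤ k := le_fgIdx hiK h1
      rcases lt_or_eq_of_le hik with hik' | hik'
      · have h2 : P (i+1) ≤ s := le_trans (hP hik') hks
        rw [clamp_of_le hsu h1, clamp_of_le hsu h2]
        simp [tp_zero_right]
      · subst hik'
        rw [clamp_of_le hsu h1]
        simp [pcApprox_eq, tp_zero_left]
    · rcases le_or_gt u (P i) with h2 | h2
      · have h3 : u ≤ P (i+1) := le_trans h2 (hP (Nat.le_succ i))
        rw [clamp_of_ge hsu h2, clamp_of_ge hsu h3]
        simp [tp_zero_right]
      · rw [clamp_of_mem h1.le h2.le, pcApprox_partition hP X hiK, pcApprox_eq]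
  rw [step1]
  have split : ∀ i ∈ Finset.range K, tp (X (P i) - X (P k))
        (X (clamp s u (P (i+1))) - X (clamp s u (P i)))
      = tp (X (P i)) (X (clamp s u (P (i+1))) - X (clamp s u (P i)))
        - tp (X (P k)) (X (clamp s u (P (i+1))) - X (clamp s u (P i))) :=
    fun i _ => tp_sub_left _ _ _
  rw [Finset.sum_congr rfl split, Finset.sum_sub_distrib,
    sum_tp_clamp X hsu, sum_tp_clamp_const X hP0 hPK hs hsu huT]

/-- Identity (a): `pcLift s u = R (P l) − R (P k) − tp (X (P k)) (X (P l) − X (P k))`. -/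
lemma pcLift_eq (X : ℝ → EuclideanSpace ℝ (Fin d)) (hP : Monotone P) (hP0 : P 0 = 0)
    (hPK : P K = T) (hs : 0 ≤ s) (hsu : s ≤ u) (huT : u ≤ T) :
    pcLift K (pcApprox X K P) P s u
      = riemannSum K X P (P (fgIdx P K u)) - riemannSum K X P (P (fgIdx P K s))
        - tp (X (P (fgIdx P K s))) (X (P (fgIdx P K u)) - X (P (fgIdx P K s))) := by
  set k := fgIdx P K s with hk
  set l := fgIdx P K u with hl
  have hkl : k ≤ l := fgIdx_mono hsu
  have hPkl : P k ≤ P l := hP hkl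
  have hPk0 : (0:ℝ) ≤ P k := by rw [← hP0]; exact hP (Nat.zero_le k)
  have hPlT : P l ≤ T := by rw [← hPK]; exact hP (fgIdx_le u)
  have step1 : pcLift K (pcApprox X K P) P s u =
      ∑ i ∈ Finset.range K, tp (X (P i) - X (P k))
        (X (clamp (P k) (P l) (P (i+1))) - X (clamp (P k) (P l) (P i))) := by
    apply Finset.sum_congr rfl
    intro i hi
    have hi1K : i + 1 ≤ K := Finset.mem_range.mp hi
    have hiK : i ≤ K := le_of_lt (Finset.mem_range.mp hi)
    rw [pcApprox_clamp X hP hP0 hs hsu hiK, pcApprox_clamp X hP hP0 hs hsu hi1K]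
    rcases lt_trichotomy i k with h1 | h1 | h1
    · rw [clamp_of_le hPkl (hP h1.le), clamp_of_le hPkl (hP h1)]
      simp [tp_zero_right]
    · subst h1
      rw [clamp_of_le hPkl le_rfl]
      simp [pcApprox_eq, tp_zero_left, ← hk]
    · rcases le_or_gt i l with h2 | h2
      · rw [clamp_of_mem (hP h1.le) (hP h2), pcApprox_eq]
      · rw [clamp_of_ge hPkl (hP h2.le), clamp_of_ge hPkl (hP (le_trans h2.le (Nat.le_succ i)))]
        simp [tp_zero_right]
  rw [step1]
  have split : ∀ i ∈ Finset.range K, tp (X (P i) - X (P k))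
        (X (clamp (P k) (P l) (P (i+1))) - X (clamp (P k) (P l) (P i)))
      = tp (X (P i)) (X (clamp (P k) (P l) (P (i+1))) - X (clamp (P k) (P l) (P i)))
        - tp (X (P k)) (X (clamp (P k) (P l) (P (i+1))) - X (clamp (P k) (P l) (P i))) :=
    fun i _ => tp_sub_left _ _ _
  rw [Finset.sum_congr rfl split, Finset.sum_sub_distrib,
    sum_tp_clamp X hPkl, sum_tp_clamp_const X hP0 hPK hPk0 hPkl hPlT]

/-- Identity (c'): `R u − R (P l) = tp (X (P l)) (X u − X (P l))`. -/
lemma riemann_diff_eq (X : ℝ → EuclideanSpace ℝ (Fin d)) (hP : Monotone P) (hP0 : P 0 = 0)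
    (hPK : P K = T) (hu : 0 ≤ u) (huT : u ≤ T) :
    riemannSum K X P u - riemannSum K X P (P (fgIdx P K u))
      = tp (X (P (fgIdx P K u))) (X u - X (P (fgIdx P K u))) := by
  set l := fgIdx P K u with hl
  have hlu : P l ≤ u := fgIdx_spec hP0 hu
  have hPl0 : (0:ℝ) ≤ P l := by rw [← hP0]; exact hP (Nat.zero_le l)
  have e1 : riemannSum K X P u - riemannSum K X P (P l)
      = ∑ i ∈ Finset.range K,
          tp (X (P i)) (X (clamp (P l) u (P (i+1))) - X (clamp (P l) u (P i))) :=
    (sum_tp_clamp X hlu).symm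
  have e2 : ∀ i ∈ Finset.range K,
      tp (X (P i)) (X (clamp (P l) u (P (i+1))) - X (clamp (P l) u (P i)))
      = tp (X (P l)) (X (clamp (P l) u (P (i+1))) - X (clamp (P l) u (P i))) := by
    intro i hi
    have hi1K : i + 1 ≤ K := Finset.mem_range.mp hi
    have hiK : i ≤ K := le_of_lt (Finset.mem_range.mp hi)
    rcases lt_trichotomy i l with h1 | h1 | h1
    · rw [clamp_of_le hlu (hP h1.le), clamp_of_le hlu (hP h1)]
      simp [tp_zero_right]
    · rw [h1]
    · have h2 : u < P i := fgIdx_lt hiK h1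
      rw [clamp_of_ge hlu h2.le, clamp_of_ge hlu (le_trans h2.le (hP (Nat.le_succ i)))]
      simp [tp_zero_right]
  rw [e1, Finset.sum_congr rfl e2,
    sum_tp_clamp_const X hP0 hPK hPl0 hlu huT]
end Identities

lemma interp_rpow {x y q q' : ℝ} (hx : 0 ≤ x) (hxy : x ≤ y) (hq : 0 < q) (hq' : q ≤ q') :
    x ^ q' ≤ y ^ (q' - q) * x ^ q := by
  have h1 : x ^ q' = x ^ (q' - q) * x ^ q := by
    rw [← Real.rpow_add' hx (by rw [sub_add_cancel]; exact (lt_of_lt_of_le hq hq').ne'), sub_add_cancel]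
  rw [h1]
  exact mul_le_mul_of_nonneg_right
    (Real.rpow_le_rpow hx hxy (sub_nonneg.mpr hq')) (Real.rpow_nonneg hx q)

lemma rpow_add_le_two_rpow {x y r : ℝ} (hx : 0 ≤ x) (hy : 0 ≤ y) (hr : 0 ≤ r) :
    (x + y) ^ r ≤ 2 ^ r * (x ^ r + y ^ r) := by
  rcases le_total x y with h | h
  · calc (x + y) ^ r ≤ (2 * y) ^ r := Real.rpow_le_rpow (by linarith) (by linarith) hr
    _ = 2 ^ r * y ^ r := Real.mul_rpow (by norm_num) hy
    _ ≤ 2 ^ r * (x ^ r + y ^ r) := by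
        have := Real.rpow_nonneg hx r
        have h2 : (0:ℝ) ≤ (2:ℝ) ^ r := Real.rpow_nonneg (by norm_num) r
        nlinarith
  · calc (x + y) ^ r ≤ (2 * x) ^ r := Real.rpow_le_rpow (by linarith) (by linarith) hr
    _ = 2 ^ r * x ^ r := Real.mul_rpow (by norm_num) hx
    _ ≤ 2 ^ r * (x ^ r + y ^ r) := by
        have := Real.rpow_nonneg hy r
        have h2 : (0:ℝ) ≤ (2:ℝ) ^ r := Real.rpow_nonneg (by norm_num) r
        nlinarith

lemma rpow_add_le_add_rpow' {x y r : ℝ} (hx : 0 ≤ x) (hy : 0 ≤ y) (hr : 0 ≤ r) (hr1 : r ≤ 1) :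
    (x + y) ^ r ≤ x ^ r + y ^ r := by
  have h := NNReal.rpow_add_le_add_rpow x.toNNReal y.toNNReal hr hr1
  rw [← Real.toNNReal_add hx hy] at h
  have h2 := NNReal.coe_le_coe.mpr h
  push_cast at h2
  rwa [Real.coe_toNNReal _ (by linarith), Real.coe_toNNReal _ hx,
    Real.coe_toNNReal _ hy] at h2

lemma rpow_le_one_add {x r : ℝ} (hx : 0 ≤ x) (hr : 0 ≤ r) (hr1 : r ≤ 1) :
    x ^ r ≤ 1 + x := by
  rcases le_total x 1 with h | h
  · calc x ^ r ≤ 1 ^ r := Real.rpow_le_rpow hx h hr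
    _ = 1 := Real.one_rpow r
    _ ≤ 1 + x := by linarith
  · calc x ^ r ≤ x ^ (1:ℝ) := Real.rpow_le_rpow_of_exponent_le h hr1
    _ = x := Real.rpow_one x
    _ ≤ 1 + x := by linarith

lemma control_mono {T : ℝ} {w : ℝ → ℝ → ℝ} (hw : IsControl T w) {a b a' b' : ℝ}
    (ha : 0 ≤ a') (h1 : a' ≤ a) (h2 : a ≤ b) (h3 : b ≤ b') (h4 : b' ≤ T) :
    w a b ≤ w a' b' := by
  have s1 := hw.2 a' a b ha h1 h2 (le_trans h3 h4)
  have s2 := hw.2 a' b b' ha (le_trans h1 h2) h3 h4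
  have n1 := hw.1 a' a ha h1 (le_trans h2 (le_trans h3 h4))
  have n2 := hw.1 b b' (le_trans ha (le_trans h1 h2)) h3 h4
  linarith

lemma control_sum {T : ℝ} {w : ℝ → ℝ → ℝ} (hw : IsControl T w) (a : ℕ → ℝ)
    (ha : Monotone a) (h0 : 0 ≤ a 0) :
    ∀ m : ℕ, a m ≤ T → ∑ j ∈ Finset.range m, w (a j) (a (j + 1)) ≤ w (a 0) (a m) := by
  intro m
  induction m with
  | zero => intro hm; simpa using hw.1 (a 0) (a 0) h0 le_rfl hm
  | succ m ih =>
    intro hm1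
    have hm : a m ≤ T := le_trans (ha (Nat.le_succ m)) hm1
    rw [Finset.sum_range_succ]
    have := hw.2 (a 0) (a m) (a (m+1)) h0 (ha (Nat.zero_le m)) (ha (Nat.le_succ m)) hm1
    linarith [ih hm]

lemma control_sum_le {T : ℝ} {w : ℝ → ℝ → ℝ} (hw : IsControl T w) (a : ℕ → ℝ)
    (ha : Monotone a) (h0 : 0 ≤ a 0) {m : ℕ} (hm : a m ≤ T) :
    ∑ j ∈ Finset.range m, w (a j) (a (j + 1)) ≤ w 0 T :=
  le_trans (control_sum hw a ha h0 m hm)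
    (control_mono hw le_rfl h0 (ha (Nat.zero_le m)) hm le_rfl)

end AuxLemmas


section Chunk5
variable {d : ℕ}

lemma tp_add_right (v a b : EuclideanSpace ℝ (Fin d)) : tp v (a + b) = tp v a + tp v b := by
  ext q; simp [tp, tp2, mul_add]

lemma rpow_root_le {x c q : ℝ} (hx : 0 ≤ x) (hq : 0 < q) (h : x ^ q ≤ c) :
    x ≤ c ^ (1 / q) := by
  have hxx : x = (x ^ q) ^ (1 / q) := by
    rw [← Real.rpow_mul hx, mul_one_div, div_self hq.ne', Real.rpow_one]
  rw [hxx]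
  exact Real.rpow_le_rpow (by positivity) h (by positivity)

lemma epVar_le_of_forall {E : Type*} [NormedAddCommGroup E] (f : ℝ → E) {q T A : ℝ}
    (hq : 0 < q) (hA : 0 ≤ A)
    (h : ∀ (m : ℕ) (τ : ℕ → ℝ), Monotone τ → τ 0 = 0 → τ m = T →
      ∑ j ∈ Finset.range m, ‖f (τ (j + 1)) - f (τ j)‖ ^ q ≤ A) :
    epVar f q T ≤ ENNReal.ofReal (A ^ (1 / q)) := by
  unfold epVar
  rw [← ENNReal.ofReal_rpow_of_nonneg hA (by positivity)]
  apply ENNReal.rpow_le_rpow _ (by positivity)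
  apply iSup_le; intro m; apply iSup_le; intro τ
  apply iSup_le; intro hm; apply iSup_le; intro h0'; apply iSup_le; intro hm'
  rw [← ENNReal.ofReal_sum_of_nonneg (fun j _ => by positivity)]
  exact ENNReal.ofReal_le_ofReal (h m τ hm h0' hm')

lemma epVar2_le_of_forall {E : Type*} [NormedAddCommGroup E] (A : ℝ → ℝ → E) {q T c : ℝ}
    (hq : 0 < q) (hc : 0 ≤ c)
    (h : ∀ (m : ℕ) (τ : ℕ → ℝ), Monotone τ → τ 0 = 0 → τ m = T →
      ∑ j ∈ Finset.range m, ‖A (τ j) (τ (j + 1))‖ ^ q ≤ c) :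
    epVar2 A q T ≤ ENNReal.ofReal (c ^ (1 / q)) := by
  unfold epVar2
  rw [← ENNReal.ofReal_rpow_of_nonneg hc (by positivity)]
  apply ENNReal.rpow_le_rpow _ (by positivity)
  apply iSup_le; intro m; apply iSup_le; intro τ
  apply iSup_le; intro hm; apply iSup_le; intro h0'; apply iSup_le; intro hm'
  rw [← ENNReal.ofReal_sum_of_nonneg (fun j _ => by positivity)]
  exact ENNReal.ofReal_le_ofReal (h m τ hm h0' hm')

lemma clamp_mem {s u x : ℝ} (hs : 0 ≤ s) (hsu : s ≤ u) :
    0 ≤ clamp s u x ∧ clamp s u x ≤ u :=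
  ⟨le_trans hs (le_max_left _ _), max_le hsu (min_le_right _ _)⟩

end Chunk5

set_option maxHeartbeats 4000000 in
/-- convergence of the discretized rough paths to the canonical rough path
lift under Property (RIE), with quantitative rate. -/
theorem discretized_rough_path_convergence (d : ℕ) (p p' T : ℝ)
    (hp2 : 2 < p) (hp3 : p < 3) (hpp' : p < p') (hT : 0 < T)
    (X : ℝ → EuclideanSpace ℝ (Fin d)) (N : ℕ → ℕ) (t : ℕ → ℕ → ℝ)
    (hmono : ∀ n, Monotone (t n)) (h0 : ∀ n, t n 0 = 0) (htop : ∀ n, t n (N n) = T)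
    (hmesh : ∀ ε > 0, ∃ m, ∀ n ≥ m, ∀ i < N n, t n (i + 1) - t n i < ε)
    (hunif : TendstoUniformlyOn (fun n s => pcApprox X (N n) (t n) s) X atTop (Set.Icc 0 T))
    (I : ℝ → EuclideanSpace ℝ (Fin d × Fin d))
    (hI : TendstoUniformlyOn (fun n u => riemannSum (N n) X (t n) u) I atTop (Set.Icc 0 T))
    (w : ℝ → ℝ → ℝ) (hw : IsControl T w)
    (hwX : ∀ s u, 0 ≤ s → s ≤ u → u ≤ T → ‖X u - X s‖ ^ p ≤ w s u)
    (hwR : ∀ n, ∀ k ℓ : ℕ, k < ℓ → ℓ ≤ N n →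
      ‖riemannSum (N n) X (t n) (t n ℓ) - riemannSum (N n) X (t n) (t n k) -
          tp (X (t n k)) (X (t n ℓ) - X (t n k))‖ ^ (p / 2) ≤ w (t n k) (t n ℓ)) :
    Tendsto (fun n =>
        epVar (fun u => pcApprox X (N n) (t n) u - X u) p' T +
        epVar2 (fun s u => pcLift (N n) (pcApprox X (N n) (t n)) (t n) s u -
            (I u - I s - tp (X s) (X u - X s))) (p' / 2) T) atTop (nhds 0) ∧
    ∃ C : ℝ, 0 < C ∧ ∀ n,
      epVar (fun u => pcApprox X (N n) (t n) u - X u) p' T +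
      epVar2 (fun s u => pcLift (N n) (pcApprox X (N n) (t n)) (t n) s u -
          (I u - I s - tp (X s) (X u - X s))) (p' / 2) T ≤
      ENNReal.ofReal (C * (
        (⨆ u : Set.Icc (0 : ℝ) T, ‖pcApprox X (N n) (t n) u.1 - X u.1‖) ^ (1 - p / p') +
        (⨆ z : {z : ℝ × ℝ // 0 ≤ z.1 ∧ z.1 ≤ z.2 ∧ z.2 ≤ T},
          ‖mixedInt (N n) X (t n) z.1.1 z.1.2 -
            (I z.1.2 - I z.1.1 - tp (X z.1.1) (X z.1.2 - X z.1.1))‖) ^ (1 - p / p'))) := by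
  
  classical
  have hp0 : (0 : ℝ) < p := by linarith
  have hp'0 : (0 : ℝ) < p' := by linarith
  have h0T : (0 : ℝ) ≤ T := hT.le
  have hw0T : (0 : ℝ) ≤ w 0 T := hw.1 0 T le_rfl h0T le_rfl
  set α : ℝ := 1 - p / p' with hα
  have hα0 : 0 < α := by
    have h1 : p / p' < 1 := (div_lt_one hp'0).mpr hpp'
    simp only [hα]; linarith
  have hα1 : α ≤ 1 := by
    have h1 : 0 ≤ p / p' := by positivity
    simp only [hα]; linarith
  set B : ℝ := ‖X 0‖ + w 0 T ^ (1 / p) with hBdef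
  have hB0 : 0 ≤ B := by positivity
  have hBX : ∀ v, 0 ≤ v → v ≤ T → ‖X v‖ ≤ B := by
    intro v hv hvT
    have h1 : ‖X v - X 0‖ ^ p ≤ w 0 T :=
      le_trans (hwX 0 v le_rfl hv hvT) (control_mono hw le_rfl le_rfl hv hvT le_rfl)
    have h3 : ‖X v - X 0‖ ≤ w 0 T ^ (1 / p) := rpow_root_le (norm_nonneg _) hp0 h1
    calc ‖X v‖ = ‖X 0 + (X v - X 0)‖ := by congr 1; abel
    _ ≤ ‖X 0‖ + ‖X v - X 0‖ := norm_add_le _ _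
    _ ≤ B := by rw [hBdef]; linarith
  have htmem : ∀ n i, i ≤ N n → 0 ≤ t n i ∧ t n i ≤ T := fun n i hi =>
    ⟨by rw [← h0 n]; exact hmono n (Nat.zero_le i), by rw [← htop n]; exact hmono n hi⟩
  have hBXn : ∀ n v, ‖pcApprox X (N n) (t n) v‖ ≤ B := by
    intro n v
    rw [pcApprox_eq]
    obtain ⟨ha, hb⟩ := htmem n _ (fgIdx_le v)
    exact hBX _ ha hb
  -- the sup quantities
  set eps : ℕ → ℝ := fun n => ⨆ u : Set.Icc (0 : ℝ) T, ‖pcApprox X (N n) (t n) u.1 - X u.1‖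
    with hepsdef
  set del : ℕ → ℝ := fun n => ⨆ z : {z : ℝ × ℝ // 0 ≤ z.1 ∧ z.1 ≤ z.2 ∧ z.2 ≤ T},
      ‖mixedInt (N n) X (t n) z.1.1 z.1.2 -
        (I z.1.2 - I z.1.1 - tp (X z.1.1) (X z.1.2 - X z.1.1))‖ with hdeldef
  have heps_nonneg : ∀ n, 0 ≤ eps n :=
    fun n => Real.iSup_nonneg (fun _ => norm_nonneg _)
  have hdel_nonneg : ∀ n, 0 ≤ del n :=
    fun n => Real.iSup_nonneg (fun _ => norm_nonneg _)
  have heps_le : ∀ n v, 0 ≤ v → v ≤ T → ‖pcApprox X (N n) (t n) v - X v‖ ≤ eps n := by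
    intro n v hv hvT
    have hbdd : BddAbove (Set.range fun u : Set.Icc (0 : ℝ) T =>
        ‖pcApprox X (N n) (t n) u.1 - X u.1‖) := by
      refine ⟨2 * B, ?_⟩
      rintro x ⟨u, rfl⟩
      calc ‖pcApprox X (N n) (t n) u.1 - X u.1‖
          ≤ ‖pcApprox X (N n) (t n) u.1‖ + ‖X u.1‖ := norm_sub_le _ _
      _ ≤ B + B := add_le_add (hBXn n u.1) (hBX u.1 u.2.1 u.2.2)
      _ = 2 * B := by ring
    exact le_ciSup hbdd (⟨v, hv, hvT⟩ : Set.Icc (0 : ℝ) T)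
  have heps_to0 : Tendsto eps atTop (nhds 0) := by
    apply tendsto_order.2
    constructor
    · intro a ha
      exact Eventually.of_forall (fun n => lt_of_lt_of_le ha (heps_nonneg n))
    · intro a ha
      filter_upwards [(Metric.tendstoUniformlyOn_iff.mp hunif) (a / 2) (by linarith)]
        with n hn
      have hl : eps n ≤ a / 2 := by
        apply Real.iSup_le _ (by linarith)
        intro v
        have h1 := hn v.1 v.2
        rw [dist_eq_norm] at h1
        rw [norm_sub_rev]
        exact h1.le
      linarith
  -- bound on I and the mixed integral
  have hRB : ∀ n v, 0 ≤ v → v ≤ T → ‖riemannSum (N n) X (t n) v‖ ≤ (N n) * (2 * B ^ 2) := by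
    intro n v hv hvT
    unfold riemannSum
    refine le_trans (norm_sum_le _ _) ?_
    have hterm : ∀ k ∈ Finset.range (N n),
        ‖tp (X (t n k)) (X (min (t n (k + 1)) v) - X (min (t n k) v))‖ ≤ 2 * B ^ 2 := by
      intro k hk
      refine le_trans (norm_tp_le _ _) ?_
      have hb1 : ‖X (t n k)‖ ≤ B := by
        obtain ⟨ha, hb⟩ := htmem n k (le_of_lt (Finset.mem_range.mp hk))
        exact hBX _ ha hb
      have hmm : ∀ j, j ≤ N n → ‖X (min (t n j) v)‖ ≤ B := by
        intro j hj
        obtain ⟨ha, hb⟩ := htmem n j hj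
        exact hBX _ (le_min ha hv) (le_trans (min_le_right _ _) hvT)
      have hb2 : ‖X (min (t n (k + 1)) v) - X (min (t n k) v)‖ ≤ 2 * B :=
        le_trans (norm_sub_le _ _) (by
          have := hmm (k + 1) (Finset.mem_range.mp hk)
          have := hmm k (le_of_lt (Finset.mem_range.mp hk))
          linarith)
      calc ‖X (t n k)‖ * ‖X (min (t n (k + 1)) v) - X (min (t n k) v)‖
          ≤ B * (2 * B) := mul_le_mul hb1 hb2 (norm_nonneg _) hB0
      _ = 2 * B ^ 2 := by ring
    refine le_trans (Finset.sum_le_sum hterm) ?_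
    rw [Finset.sum_const, Finset.card_range, nsmul_eq_mul]
  obtain ⟨CI, hCI⟩ : ∃ CI, ∀ v, 0 ≤ v → v ≤ T → ‖I v‖ ≤ CI := by
    obtain ⟨n₀, hn₀⟩ := ((Metric.tendstoUniformlyOn_iff.mp hI) 1 one_pos).exists
    refine ⟨(N n₀) * (2 * B ^ 2) + 1, fun v hv hvT => ?_⟩
    have h2 := hn₀ v ⟨hv, hvT⟩
    rw [dist_eq_norm] at h2
    calc ‖I v‖ = ‖(I v - riemannSum (N n₀) X (t n₀) v) + riemannSum (N n₀) X (t n₀) v‖ := by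
          congr 1; abel
    _ ≤ ‖I v - riemannSum (N n₀) X (t n₀) v‖ + ‖riemannSum (N n₀) X (t n₀) v‖ :=
          norm_add_le _ _
    _ ≤ (N n₀) * (2 * B ^ 2) + 1 := by
          have := hRB n₀ v hv hvT
          linarith
  have hXXB : ∀ s u : ℝ, 0 ≤ s → s ≤ u → u ≤ T →
      ‖I u - I s - tp (X s) (X u - X s)‖ ≤ 2 * CI + 2 * B ^ 2 := by
    intro s u hs hsu huT
    have hu0 : (0:ℝ) ≤ u := le_trans hs hsu
    have h1 := hCI u hu0 huT
    have h2 := hCI s hs (le_trans hsu huT)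
    have h3 : ‖tp (X s) (X u - X s)‖ ≤ 2 * B ^ 2 := by
      refine le_trans (norm_tp_le _ _) ?_
      have hb1 := hBX s hs (le_trans hsu huT)
      have hb2 : ‖X u - X s‖ ≤ 2 * B := le_trans (norm_sub_le _ _) (by
        have := hBX u hu0 huT
        linarith)
      calc ‖X s‖ * ‖X u - X s‖ ≤ B * (2 * B) :=
        mul_le_mul hb1 hb2 (norm_nonneg _) hB0
      _ = 2 * B ^ 2 := by ring
    calc ‖I u - I s - tp (X s) (X u - X s)‖
        ≤ ‖I u - I s‖ + ‖tp (X s) (X u - X s)‖ := norm_sub_le _ _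
    _ ≤ (‖I u‖ + ‖I s‖) + ‖tp (X s) (X u - X s)‖ := by
        have := norm_sub_le (I u) (I s); linarith
    _ ≤ 2 * CI + 2 * B ^ 2 := by linarith
  have hmixedB : ∀ n (s u : ℝ), 0 ≤ s → s ≤ u → u ≤ T →
      ‖mixedInt (N n) X (t n) s u‖ ≤ (N n) * (4 * B ^ 2) := by
    intro n s u hs hsu huT
    unfold mixedInt
    refine le_trans (norm_sum_le _ _) ?_
    have hterm : ∀ i ∈ Finset.range (N n),
        ‖tp (pcApprox X (N n) (t n) (clamp s u (t n i)) - pcApprox X (N n) (t n) s)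
          (X (clamp s u (t n (i + 1))) - X (clamp s u (t n i)))‖ ≤ 4 * B ^ 2 := by
      intro i _
      refine le_trans (norm_tp_le _ _) ?_
      have hXc : ∀ x : ℝ, ‖X (clamp s u x)‖ ≤ B := by
        intro x
        obtain ⟨hc1, hc2⟩ := clamp_mem (x := x) hs hsu
        exact hBX _ hc1 (le_trans hc2 huT)
      have hb1 : ‖pcApprox X (N n) (t n) (clamp s u (t n i)) - pcApprox X (N n) (t n) s‖
          ≤ 2 * B := le_trans (norm_sub_le _ _) (by
        have := hBXn n (clamp s u (t n i)); have := hBXn n s; linarith)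
      have hb2 : ‖X (clamp s u (t n (i + 1))) - X (clamp s u (t n i))‖ ≤ 2 * B :=
        le_trans (norm_sub_le _ _) (by
          have := hXc (t n (i + 1)); have := hXc (t n i); linarith)
      calc ‖pcApprox X (N n) (t n) (clamp s u (t n i)) - pcApprox X (N n) (t n) s‖ *
            ‖X (clamp s u (t n (i + 1))) - X (clamp s u (t n i))‖
          ≤ (2 * B) * (2 * B) := mul_le_mul hb1 hb2 (norm_nonneg _) (by positivity)
      _ = 4 * B ^ 2 := by ring
    refine le_trans (Finset.sum_le_sum hterm) ?_
    rw [Finset.sum_const, Finset.card_range, nsmul_eq_mul]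
  have hdel_le : ∀ n (s u : ℝ), 0 ≤ s → s ≤ u → u ≤ T →
      ‖mixedInt (N n) X (t n) s u - (I u - I s - tp (X s) (X u - X s))‖ ≤ del n := by
    intro n s u hs hsu huT
    have hbdd : BddAbove (Set.range fun z : {z : ℝ × ℝ // 0 ≤ z.1 ∧ z.1 ≤ z.2 ∧ z.2 ≤ T} =>
        ‖mixedInt (N n) X (t n) z.1.1 z.1.2 -
          (I z.1.2 - I z.1.1 - tp (X z.1.1) (X z.1.2 - X z.1.1))‖) := by
      refine ⟨(N n) * (4 * B ^ 2) + (2 * CI + 2 * B ^ 2), ?_⟩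
      rintro x ⟨⟨⟨a, b⟩, ha, hab, hbT⟩, rfl⟩
      refine le_trans (norm_sub_le _ _) ?_
      have := hmixedB n a b ha hab hbT
      have := hXXB a b ha hab hbT
      dsimp only
      linarith
    exact le_ciSup hbdd (⟨(s, u), hs, hsu, huT⟩ : {z : ℝ × ℝ // 0 ≤ z.1 ∧ z.1 ≤ z.2 ∧ z.2 ≤ T})
  -- identity for mixedInt minus the canonical lift
  have hmix_eq : ∀ n (s u : ℝ), 0 ≤ s → s ≤ u → u ≤ T →
      mixedInt (N n) X (t n) s u - (I u - I s - tp (X s) (X u - X s))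
      = (riemannSum (N n) X (t n) u - I u) - (riemannSum (N n) X (t n) s - I s)
        - (tp (pcApprox X (N n) (t n) s) (X u - X s) - tp (X s) (X u - X s)) := by
    intro n s u hs hsu huT
    rw [mixedInt_eq X (hmono n) (h0 n) (htop n) hs hsu huT,
      ← pcApprox_eq (K := N n) (P := t n) X s]
    abel
  have hdel_to0 : Tendsto del atTop (nhds 0) := by
    apply tendsto_order.2
    constructor
    · intro a ha
      exact Eventually.of_forall (fun n => lt_of_lt_of_le ha (hdel_nonneg n))
    · intro a ha
      filter_upwards [(Metric.tendstoUniformlyOn_iff.mp hI) (a / 4) (by linarith),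
        (Metric.tendstoUniformlyOn_iff.mp hunif) (a / (8 * (B + 1))) (by positivity)]
        with n hn1 hn2
      have hl : del n ≤ 3 * a / 4 := by
        apply Real.iSup_le _ (by linarith)
        rintro ⟨⟨s, u⟩, hs, hsu, huT⟩
        dsimp only
        rw [hmix_eq n s u hs hsu huT]
        have hu0 : (0:ℝ) ≤ u := le_trans hs hsu
        have d1 := hn1 u ⟨hu0, huT⟩
        have d2 := hn1 s ⟨hs, le_trans hsu huT⟩
        have d3 := hn2 s ⟨hs, le_trans hsu huT⟩
        rw [dist_eq_norm] at d1 d2 d3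
        have etp : ‖tp (pcApprox X (N n) (t n) s) (X u - X s) - tp (X s) (X u - X s)‖
            ≤ (a / (8 * (B + 1))) * (2 * B) := by
          rw [← tp_sub_left]
          refine le_trans (norm_tp_le _ _) ?_
          refine mul_le_mul ?_ ?_ (norm_nonneg _) (by positivity)
          · rw [norm_sub_rev]; exact d3.le
          · refine le_trans (norm_sub_le _ _) ?_
            have := hBX u hu0 huT
            have := hBX s hs (le_trans hsu huT)
            linarith
        have step : ‖(riemannSum (N n) X (t n) u - I u) - (riemannSum (N n) X (t n) s - I s)
            - (tp (pcApprox X (N n) (t n) s) (X u - X s) - tp (X s) (X u - X s))‖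
            ≤ ‖riemannSum (N n) X (t n) u - I u‖ + ‖riemannSum (N n) X (t n) s - I s‖
              + ‖tp (pcApprox X (N n) (t n) s) (X u - X s) - tp (X s) (X u - X s)‖ := by
          refine le_trans (norm_sub_le _ _) ?_
          have := norm_sub_le (riemannSum (N n) X (t n) u - I u)
            (riemannSum (N n) X (t n) s - I s)
          linarith
        have e1 : ‖riemannSum (N n) X (t n) u - I u‖ ≤ a / 4 := by
          rw [norm_sub_rev]; exact d1.le
        have e2 : ‖riemannSum (N n) X (t n) s - I s‖ ≤ a / 4 := by
          rw [norm_sub_rev]; exact d2.le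
        have e3 : (a / (8 * (B + 1))) * (2 * B) ≤ a / 4 := by
          rw [div_mul_eq_mul_div, div_le_div_iff₀ (by positivity) (by norm_num)]
          nlinarith
        linarith
      linarith
  -- the pathwise p/2-variation bound for the discretized lift
  have hlift : ∀ n (s u : ℝ), 0 ≤ s → s ≤ u → u ≤ T →
      ‖pcLift (N n) (pcApprox X (N n) (t n)) (t n) s u‖ ^ (p / 2)
        ≤ w (t n (fgIdx (t n) (N n) s)) (t n (fgIdx (t n) (N n) u)) := by
    intro n s u hs hsu huT
    rw [pcLift_eq X (hmono n) (h0 n) (htop n) hs hsu huT]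
    rcases lt_or_eq_of_le (fgIdx_mono (P := t n) (K := N n) hsu) with hkl | hkl
    · exact hwR n _ _ hkl (fgIdx_le u)
    · have hz : riemannSum (N n) X (t n) (t n (fgIdx (t n) (N n) u)) -
          riemannSum (N n) X (t n) (t n (fgIdx (t n) (N n) s)) -
          tp (X (t n (fgIdx (t n) (N n) s)))
            (X (t n (fgIdx (t n) (N n) u)) - X (t n (fgIdx (t n) (N n) s))) = 0 := by
        rw [← hkl]
        simp [tp_zero_right]
      rw [hz, norm_zero, Real.zero_rpow (by positivity : (0:ℝ) < p / 2).ne']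
      exact hw.1 _ _ (htmem n _ (fgIdx_le s)).1 (hmono n (fgIdx_mono hsu))
        (htmem n _ (fgIdx_le u)).2
  -- pcLift minus mixedInt is a single boundary tensor term
  have hpm : ∀ n (s u : ℝ), 0 ≤ s → s ≤ u → u ≤ T →
      pcLift (N n) (pcApprox X (N n) (t n)) (t n) s u - mixedInt (N n) X (t n) s u
      = tp (pcApprox X (N n) (t n) s - pcApprox X (N n) (t n) u)
          (X u - pcApprox X (N n) (t n) u) := by
    intro n s u hs hsu huT
    have hu0 : (0:ℝ) ≤ u := le_trans hs hsu
    have h3 : riemannSum (N n) X (t n) u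
        = tp (X (t n (fgIdx (t n) (N n) u))) (X u - X (t n (fgIdx (t n) (N n) u)))
          + riemannSum (N n) X (t n) (t n (fgIdx (t n) (N n) u)) := by
      rw [← riemann_diff_eq X (hmono n) (h0 n) (htop n) hu0 huT]; abel
    have h4 : riemannSum (N n) X (t n) s
        = tp (X (t n (fgIdx (t n) (N n) s))) (X s - X (t n (fgIdx (t n) (N n) s)))
          + riemannSum (N n) X (t n) (t n (fgIdx (t n) (N n) s)) := by
      rw [← riemann_diff_eq X (hmono n) (h0 n) (htop n) hs (le_trans hsu huT)]; abel
    rw [pcLift_eq X (hmono n) (h0 n) (htop n) hs hsu huT,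
      mixedInt_eq X (hmono n) (h0 n) (htop n) hs hsu huT, h3, h4,
      pcApprox_eq (K := N n) (P := t n) X s, pcApprox_eq (K := N n) (P := t n) X u]
    simp only [tp_sub_left, tp_sub_right]
    abel
  have hdiff : ∀ n (s u : ℝ), 0 ≤ s → s ≤ u → u ≤ T →
      ‖pcLift (N n) (pcApprox X (N n) (t n)) (t n) s u -
        (I u - I s - tp (X s) (X u - X s))‖ ≤ 2 * B * eps n + del n := by
    intro n s u hs hsu huT
    have hu0 : (0:ℝ) ≤ u := le_trans hs hsu
    have key : pcLift (N n) (pcApprox X (N n) (t n)) (t n) s u -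
        (I u - I s - tp (X s) (X u - X s))
        = (pcLift (N n) (pcApprox X (N n) (t n)) (t n) s u - mixedInt (N n) X (t n) s u)
          + (mixedInt (N n) X (t n) s u - (I u - I s - tp (X s) (X u - X s))) := by abel
    rw [key]
    refine le_trans (norm_add_le _ _) (add_le_add ?_ (hdel_le n s u hs hsu huT))
    rw [hpm n s u hs hsu huT]
    refine le_trans (norm_tp_le _ _) ?_
    have e1 : ‖pcApprox X (N n) (t n) s - pcApprox X (N n) (t n) u‖ ≤ 2 * B :=
      le_trans (norm_sub_le _ _) (by
        have := hBXn n s; have := hBXn n u; linarith)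
    have e2 : ‖X u - pcApprox X (N n) (t n) u‖ ≤ eps n := by
      rw [norm_sub_rev]; exact heps_le n u hu0 huT
    calc ‖pcApprox X (N n) (t n) s - pcApprox X (N n) (t n) u‖ *
          ‖X u - pcApprox X (N n) (t n) u‖
        ≤ (2 * B) * eps n := mul_le_mul e1 e2 (norm_nonneg _) (by positivity)
    _ = 2 * B * eps n := by ring
  have heta_nonneg : ∀ n, 0 ≤ 2 * B * eps n + del n := fun n =>
    add_nonneg (mul_nonneg (by positivity) (heps_nonneg n)) (hdel_nonneg n)
  have heta_to0 : Tendsto (fun n => 2 * B * eps n + del n) atTop (nhds 0) := by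
    have h1 : Tendsto (fun n => 2 * B * eps n) atTop (nhds (2 * B * 0)) :=
      heps_to0.const_mul _
    have h2 := h1.add hdel_to0
    simpa using h2
  -- p-variation sums along partitions
  have hsumX : ∀ (m : ℕ) (τ : ℕ → ℝ), Monotone τ → τ 0 = 0 → τ m = T →
      ∑ j ∈ Finset.range m, ‖X (τ (j + 1)) - X (τ j)‖ ^ p ≤ w 0 T := by
    intro m τ hmon h0' hm'
    have hmem : ∀ j, j ≤ m → 0 ≤ τ j ∧ τ j ≤ T := fun j hj =>
      ⟨by rw [← h0']; exact hmon (Nat.zero_le j), by rw [← hm']; exact hmon hj⟩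
    refine le_trans (Finset.sum_le_sum ?_)
      (control_sum_le hw τ hmon (le_of_eq h0'.symm) (le_of_eq hm'))
    intro j hj
    exact hwX (τ j) (τ (j + 1)) (hmem j (le_of_lt (Finset.mem_range.mp hj))).1
      (hmon (Nat.le_succ j)) (hmem (j + 1) (Finset.mem_range.mp hj)).2
  have hsumXn : ∀ n (m : ℕ) (τ : ℕ → ℝ), Monotone τ → τ 0 = 0 → τ m = T →
      ∑ j ∈ Finset.range m,
        ‖pcApprox X (N n) (t n) (τ (j + 1)) - pcApprox X (N n) (t n) (τ j)‖ ^ p ≤ w 0 T := by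
    intro n m τ hmon h0' hm'
    have hamono : Monotone (fun j => t n (fgIdx (t n) (N n) (τ j))) :=
      fun j1 j2 hj => hmono n (fgIdx_mono (hmon hj))
    have habd : ∀ j, 0 ≤ t n (fgIdx (t n) (N n) (τ j)) ∧ t n (fgIdx (t n) (N n) (τ j)) ≤ T :=
      fun j => htmem n _ (fgIdx_le (τ j))
    refine le_trans (Finset.sum_le_sum ?_)
      (control_sum_le hw (fun j => t n (fgIdx (t n) (N n) (τ j))) hamono (habd 0).1 (habd m).2)
    intro j _
    rw [pcApprox_eq (K := N n) (P := t n) X (τ (j + 1)),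
      pcApprox_eq (K := N n) (P := t n) X (τ j)]
    exact hwX _ _ (habd j).1 (hamono (Nat.le_succ j)) (habd (j + 1)).2
  have hsumLift : ∀ n (m : ℕ) (τ : ℕ → ℝ), Monotone τ → τ 0 = 0 → τ m = T →
      ∑ j ∈ Finset.range m,
        ‖pcLift (N n) (pcApprox X (N n) (t n)) (t n) (τ j) (τ (j + 1))‖ ^ (p / 2)
        ≤ w 0 T := by
    intro n m τ hmon h0' hm'
    have hmem : ∀ j, j ≤ m → 0 ≤ τ j ∧ τ j ≤ T := fun j hj =>
      ⟨by rw [← h0']; exact hmon (Nat.zero_le j), by rw [← hm']; exact hmon hj⟩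
    have hamono : Monotone (fun j => t n (fgIdx (t n) (N n) (τ j))) :=
      fun j1 j2 hj => hmono n (fgIdx_mono (hmon hj))
    have habd : ∀ j, 0 ≤ t n (fgIdx (t n) (N n) (τ j)) ∧ t n (fgIdx (t n) (N n) (τ j)) ≤ T :=
      fun j => htmem n _ (fgIdx_le (τ j))
    refine le_trans (Finset.sum_le_sum ?_)
      (control_sum_le hw (fun j => t n (fgIdx (t n) (N n) (τ j))) hamono (habd 0).1 (habd m).2)
    intro j hj
    exact hlift n (τ j) (τ (j + 1)) (hmem j (le_of_lt (Finset.mem_range.mp hj))).1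
      (hmon (Nat.le_succ j)) (hmem (j + 1) (Finset.mem_range.mp hj)).2
  -- p/2-variation sum for the canonical lift, via a limiting argument
  have hsumXX : ∀ (m : ℕ) (τ : ℕ → ℝ), Monotone τ → τ 0 = 0 → τ m = T →
      ∑ j ∈ Finset.range m,
        ‖I (τ (j + 1)) - I (τ j) - tp (X (τ j)) (X (τ (j + 1)) - X (τ j))‖ ^ (p / 2)
        ≤ 2 ^ (p / 2) * w 0 T := by
    intro m τ hmon h0' hm'
    have hmem : ∀ j, j ≤ m → 0 ≤ τ j ∧ τ j ≤ T := fun j hj =>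
      ⟨by rw [← h0']; exact hmon (Nat.zero_le j), by rw [← hm']; exact hmon hj⟩
    have hp2nn : (0:ℝ) ≤ p / 2 := by positivity
    have hn : ∀ n, ∑ j ∈ Finset.range m,
        ‖I (τ (j + 1)) - I (τ j) - tp (X (τ j)) (X (τ (j + 1)) - X (τ j))‖ ^ (p / 2)
        ≤ 2 ^ (p / 2) * (w 0 T + (m : ℝ) * ((2 * B * eps n + del n) ^ (p / 2))) := by
      intro n
      have hterm : ∀ j ∈ Finset.range m,
          ‖I (τ (j + 1)) - I (τ j) - tp (X (τ j)) (X (τ (j + 1)) - X (τ j))‖ ^ (p / 2)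
          ≤ 2 ^ (p / 2) *
            (‖pcLift (N n) (pcApprox X (N n) (t n)) (t n) (τ j) (τ (j + 1))‖ ^ (p / 2)
              + (2 * B * eps n + del n) ^ (p / 2)) := by
        intro j hj
        have hj1 : j + 1 ≤ m := Finset.mem_range.mp hj
        have hd := hdiff n (τ j) (τ (j + 1)) (hmem j (le_of_lt (Finset.mem_range.mp hj))).1
          (hmon (Nat.le_succ j)) (hmem (j + 1) hj1).2
        have h1 : ‖I (τ (j + 1)) - I (τ j) - tp (X (τ j)) (X (τ (j + 1)) - X (τ j))‖
            ≤ ‖pcLift (N n) (pcApprox X (N n) (t n)) (t n) (τ j) (τ (j + 1))‖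
              + (2 * B * eps n + del n) := by
          have h2 : ‖I (τ (j + 1)) - I (τ j) - tp (X (τ j)) (X (τ (j + 1)) - X (τ j))‖
              = ‖pcLift (N n) (pcApprox X (N n) (t n)) (t n) (τ j) (τ (j + 1)) -
                (pcLift (N n) (pcApprox X (N n) (t n)) (t n) (τ j) (τ (j + 1)) -
                  (I (τ (j + 1)) - I (τ j) - tp (X (τ j)) (X (τ (j + 1)) - X (τ j))))‖ := by
            congr 1; abel
          rw [h2]
          refine le_trans (norm_sub_le _ _) ?_
          linarith
        calc ‖I (τ (j + 1)) - I (τ j) - tp (X (τ j)) (X (τ (j + 1)) - X (τ j))‖ ^ (p / 2)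
            ≤ (‖pcLift (N n) (pcApprox X (N n) (t n)) (t n) (τ j) (τ (j + 1))‖
                + (2 * B * eps n + del n)) ^ (p / 2) :=
              Real.rpow_le_rpow (norm_nonneg _) h1 hp2nn
        _ ≤ 2 ^ (p / 2) *
              (‖pcLift (N n) (pcApprox X (N n) (t n)) (t n) (τ j) (τ (j + 1))‖ ^ (p / 2)
                + (2 * B * eps n + del n) ^ (p / 2)) :=
              rpow_add_le_two_rpow (norm_nonneg _) (heta_nonneg n) hp2nn
      refine le_trans (Finset.sum_le_sum hterm) ?_
      rw [← Finset.mul_sum]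
      refine mul_le_mul_of_nonneg_left ?_ (by positivity)
      rw [Finset.sum_add_distrib, Finset.sum_const, Finset.card_range, nsmul_eq_mul]
      exact add_le_add (hsumLift n m τ hmon h0' hm') le_rfl
    have hrp : Tendsto (fun n => (2 * B * eps n + del n) ^ (p / 2)) atTop (nhds 0) := by
      have hc : ContinuousAt (fun x : ℝ => x ^ (p / 2)) 0 :=
        Real.continuousAt_rpow_const 0 (p / 2) (Or.inr (by positivity))
      have h3 := hc.tendsto.comp heta_to0
      simpa [Function.comp_def, Real.zero_rpow (by positivity : (0:ℝ) < p / 2).ne'] using h3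
    have htend := ((hrp.const_mul (m : ℝ)).const_add (w 0 T)).const_mul ((2:ℝ) ^ (p / 2))
    have hfin := ge_of_tendsto htend (Eventually.of_forall hn)
    simpa using hfin
  -- Level 1 estimate
  set W1 : ℝ := 2 ^ p * (2 * w 0 T) with hW1
  have hW1nn : 0 ≤ W1 := by positivity
  have hL1 : ∀ n, epVar (fun v => pcApprox X (N n) (t n) v - X v) p' T
      ≤ ENNReal.ofReal (((2 * eps n) ^ (p' - p) * W1) ^ (1 / p')) := by
    intro n
    have h2e : (0:ℝ) ≤ 2 * eps n := by have := heps_nonneg n; linarith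
    apply epVar_le_of_forall _ hp'0 (by positivity)
    intro m τ hmon h0' hm'
    have hmem : ∀ j, j ≤ m → 0 ≤ τ j ∧ τ j ≤ T := fun j hj =>
      ⟨by rw [← h0']; exact hmon (Nat.zero_le j), by rw [← hm']; exact hmon hj⟩
    have hstep1 : ∀ j ∈ Finset.range m,
        ‖(pcApprox X (N n) (t n) (τ (j + 1)) - X (τ (j + 1))) -
          (pcApprox X (N n) (t n) (τ j) - X (τ j))‖ ^ p'
        ≤ (2 * eps n) ^ (p' - p) *
          ‖(pcApprox X (N n) (t n) (τ (j + 1)) - X (τ (j + 1))) -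
            (pcApprox X (N n) (t n) (τ j) - X (τ j))‖ ^ p := by
      intro j hj
      have hj1 : j + 1 ≤ m := Finset.mem_range.mp hj
      refine interp_rpow (norm_nonneg _) ?_ hp0 (le_of_lt hpp')
      refine le_trans (norm_sub_le _ _) ?_
      have e1 := heps_le n (τ (j + 1)) (hmem _ hj1).1 (hmem _ hj1).2
      have e2 := heps_le n (τ j) (hmem j (le_of_lt (Finset.mem_range.mp hj))).1
        (hmem j (le_of_lt (Finset.mem_range.mp hj))).2
      linarith
    refine le_trans (Finset.sum_le_sum hstep1) ?_
    rw [← Finset.mul_sum]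
    refine mul_le_mul_of_nonneg_left ?_ (by positivity)
    have hstep2 : ∀ j ∈ Finset.range m,
        ‖(pcApprox X (N n) (t n) (τ (j + 1)) - X (τ (j + 1))) -
          (pcApprox X (N n) (t n) (τ j) - X (τ j))‖ ^ p
        ≤ 2 ^ p *
          (‖pcApprox X (N n) (t n) (τ (j + 1)) - pcApprox X (N n) (t n) (τ j)‖ ^ p
            + ‖X (τ (j + 1)) - X (τ j)‖ ^ p) := by
      intro j _
      have h1 : ‖(pcApprox X (N n) (t n) (τ (j + 1)) - X (τ (j + 1))) -
            (pcApprox X (N n) (t n) (τ j) - X (τ j))‖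
          ≤ ‖pcApprox X (N n) (t n) (τ (j + 1)) - pcApprox X (N n) (t n) (τ j)‖
            + ‖X (τ (j + 1)) - X (τ j)‖ := by
        have h2 : (pcApprox X (N n) (t n) (τ (j + 1)) - X (τ (j + 1))) -
              (pcApprox X (N n) (t n) (τ j) - X (τ j))
            = (pcApprox X (N n) (t n) (τ (j + 1)) - pcApprox X (N n) (t n) (τ j)) -
              (X (τ (j + 1)) - X (τ j)) := by abel
        rw [h2]
        exact norm_sub_le _ _
      calc ‖(pcApprox X (N n) (t n) (τ (j + 1)) - X (τ (j + 1))) -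
            (pcApprox X (N n) (t n) (τ j) - X (τ j))‖ ^ p
          ≤ (‖pcApprox X (N n) (t n) (τ (j + 1)) - pcApprox X (N n) (t n) (τ j)‖
              + ‖X (τ (j + 1)) - X (τ j)‖) ^ p :=
            Real.rpow_le_rpow (norm_nonneg _) h1 hp0.le
      _ ≤ 2 ^ p *
            (‖pcApprox X (N n) (t n) (τ (j + 1)) - pcApprox X (N n) (t n) (τ j)‖ ^ p
              + ‖X (τ (j + 1)) - X (τ j)‖ ^ p) :=
            rpow_add_le_two_rpow (norm_nonneg _) (norm_nonneg _) hp0.le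
    refine le_trans (Finset.sum_le_sum hstep2) ?_
    rw [← Finset.mul_sum, hW1]
    refine mul_le_mul_of_nonneg_left ?_ (by positivity)
    rw [Finset.sum_add_distrib]
    have hh1 := hsumXn n m τ hmon h0' hm'
    have hh2 := hsumX m τ hmon h0' hm'
    linarith
  set C1 : ℝ := 2 * W1 ^ (1 / p') with hC1
  have hC1nn : 0 ≤ C1 := by positivity
  have hexp1 : (p' - p) * (1 / p') = α := by
    rw [hα]; field_simp
  have hL1' : ∀ n, epVar (fun v => pcApprox X (N n) (t n) v - X v) p' T
      ≤ ENNReal.ofReal (C1 * eps n ^ α) := by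
    intro n
    have h2e : (0:ℝ) ≤ 2 * eps n := by have := heps_nonneg n; linarith
    refine le_trans (hL1 n) (ENNReal.ofReal_le_ofReal ?_)
    have hcalc : ((2 * eps n) ^ (p' - p) * W1) ^ (1 / p')
        = (2 * eps n) ^ α * W1 ^ (1 / p') := by
      rw [Real.mul_rpow (by positivity) hW1nn, ← Real.rpow_mul h2e, hexp1]
    rw [hcalc, Real.mul_rpow (by norm_num) (heps_nonneg n)]
    have h2a : (2:ℝ) ^ α ≤ 2 := by
      calc (2:ℝ) ^ α ≤ (2:ℝ) ^ (1:ℝ) := Real.rpow_le_rpow_of_exponent_le one_le_two hα1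
      _ = 2 := Real.rpow_one 2
    have hnn1 : (0:ℝ) ≤ eps n ^ α := Real.rpow_nonneg (heps_nonneg n) α
    have hnn2 : (0:ℝ) ≤ W1 ^ (1 / p') := Real.rpow_nonneg hW1nn _
    have hfin1 : 2 ^ α * eps n ^ α * W1 ^ (1 / p') ≤ 2 * eps n ^ α * W1 ^ (1 / p') := by
      nlinarith [mul_nonneg hnn1 hnn2]
    calc 2 ^ α * eps n ^ α * W1 ^ (1 / p') ≤ 2 * eps n ^ α * W1 ^ (1 / p') := hfin1
    _ = C1 * eps n ^ α := by rw [hC1]; ring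
  -- Level 2 estimate
  set M' : ℝ := 2 ^ (p / 2) * (w 0 T + 2 ^ (p / 2) * w 0 T) with hM'
  have hM'nn : 0 ≤ M' := by positivity
  have hL2 : ∀ n, epVar2 (fun s u => pcLift (N n) (pcApprox X (N n) (t n)) (t n) s u -
        (I u - I s - tp (X s) (X u - X s))) (p' / 2) T
      ≤ ENNReal.ofReal
        (((2 * B * eps n + del n) ^ (p' / 2 - p / 2) * M') ^ (1 / (p' / 2))) := by
    intro n
    refine epVar2_le_of_forall _ (by positivity)
      (mul_nonneg (Real.rpow_nonneg (heta_nonneg n) _) hM'nn) ?_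
    · intro m τ hmon h0' hm'
      have hmem : ∀ j, j ≤ m → 0 ≤ τ j ∧ τ j ≤ T := fun j hj =>
        ⟨by rw [← h0']; exact hmon (Nat.zero_le j), by rw [← hm']; exact hmon hj⟩
      have hstep1 : ∀ j ∈ Finset.range m,
          ‖pcLift (N n) (pcApprox X (N n) (t n)) (t n) (τ j) (τ (j + 1)) -
            (I (τ (j + 1)) - I (τ j) - tp (X (τ j)) (X (τ (j + 1)) - X (τ j)))‖ ^ (p' / 2)
          ≤ (2 * B * eps n + del n) ^ (p' / 2 - p / 2) *
            ‖pcLift (N n) (pcApprox X (N n) (t n)) (t n) (τ j) (τ (j + 1)) -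
              (I (τ (j + 1)) - I (τ j) - tp (X (τ j)) (X (τ (j + 1)) - X (τ j)))‖ ^ (p / 2) := by
        intro j hj
        have hj1 : j + 1 ≤ m := Finset.mem_range.mp hj
        refine interp_rpow (norm_nonneg _) ?_ (by positivity) (by linarith)
        exact hdiff n (τ j) (τ (j + 1)) (hmem j (le_of_lt (Finset.mem_range.mp hj))).1
          (hmon (Nat.le_succ j)) (hmem (j + 1) hj1).2
      refine le_trans (Finset.sum_le_sum hstep1) ?_
      rw [← Finset.mul_sum]
      refine mul_le_mul_of_nonneg_left ?_ (Real.rpow_nonneg (heta_nonneg n) _)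
      have hstep2 : ∀ j ∈ Finset.range m,
          ‖pcLift (N n) (pcApprox X (N n) (t n)) (t n) (τ j) (τ (j + 1)) -
            (I (τ (j + 1)) - I (τ j) - tp (X (τ j)) (X (τ (j + 1)) - X (τ j)))‖ ^ (p / 2)
          ≤ 2 ^ (p / 2) *
            (‖pcLift (N n) (pcApprox X (N n) (t n)) (t n) (τ j) (τ (j + 1))‖ ^ (p / 2)
              + ‖I (τ (j + 1)) - I (τ j) - tp (X (τ j)) (X (τ (j + 1)) - X (τ j))‖ ^ (p / 2)) := by
        intro j _
        calc ‖pcLift (N n) (pcApprox X (N n) (t n)) (t n) (τ j) (τ (j + 1)) -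
              (I (τ (j + 1)) - I (τ j) - tp (X (τ j)) (X (τ (j + 1)) - X (τ j)))‖ ^ (p / 2)
            ≤ (‖pcLift (N n) (pcApprox X (N n) (t n)) (t n) (τ j) (τ (j + 1))‖
                + ‖I (τ (j + 1)) - I (τ j) - tp (X (τ j)) (X (τ (j + 1)) - X (τ j))‖) ^ (p / 2) :=
              Real.rpow_le_rpow (norm_nonneg _) (norm_sub_le _ _) (by positivity)
        _ ≤ _ := rpow_add_le_two_rpow (norm_nonneg _) (norm_nonneg _) (by positivity)
      refine le_trans (Finset.sum_le_sum hstep2) ?_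
      rw [← Finset.mul_sum, hM']
      refine mul_le_mul_of_nonneg_left ?_ (by positivity)
      rw [Finset.sum_add_distrib]
      exact add_le_add (hsumLift n m τ hmon h0' hm') (hsumXX m τ hmon h0' hm')
  set M2 : ℝ := M' ^ (2 / p') with hM2
  have hM2nn : 0 ≤ M2 := Real.rpow_nonneg hM'nn _
  have hexp2 : (p' / 2 - p / 2) * (2 / p') = α := by
    rw [hα]; field_simp
  have hL2' : ∀ n, epVar2 (fun s u => pcLift (N n) (pcApprox X (N n) (t n)) (t n) s u -
        (I u - I s - tp (X s) (X u - X s))) (p' / 2) T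
      ≤ ENNReal.ofReal (M2 * ((1 + 2 * B) * eps n ^ α + del n ^ α)) := by
    intro n
    refine le_trans (hL2 n) (ENNReal.ofReal_le_ofReal ?_)
    have h1d : 1 / (p' / 2) = 2 / p' := by rw [one_div_div]
    have hcalc : ((2 * B * eps n + del n) ^ (p' / 2 - p / 2) * M') ^ (1 / (p' / 2))
        = (2 * B * eps n + del n) ^ α * M2 := by
      rw [h1d, Real.mul_rpow (Real.rpow_nonneg (heta_nonneg n) _) hM'nn,
        ← Real.rpow_mul (heta_nonneg n), hexp2, hM2]
    rw [hcalc]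
    have h2 : (2 * B * eps n + del n) ^ α ≤ (1 + 2 * B) * eps n ^ α + del n ^ α := by
      have hsplit : (2 * B * eps n + del n) ^ α ≤ (2 * B * eps n) ^ α + del n ^ α :=
        rpow_add_le_add_rpow' (mul_nonneg (by positivity) (heps_nonneg n)) (hdel_nonneg n)
          hα0.le hα1
      have hmul : (2 * B * eps n) ^ α = (2 * B) ^ α * eps n ^ α :=
        Real.mul_rpow (by positivity) (heps_nonneg n)
      have hone : (2 * B) ^ α ≤ 1 + 2 * B := rpow_le_one_add (by positivity) hα0.le hα1
      have hnn : (0:ℝ) ≤ eps n ^ α := Real.rpow_nonneg (heps_nonneg n) α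
      nlinarith
    have hnn2 : (0:ℝ) ≤ (2 * B * eps n + del n) ^ α := Real.rpow_nonneg (heta_nonneg n) α
    nlinarith
  -- final constant and conclusion
  set C : ℝ := C1 + M2 * (1 + 2 * B) + M2 + 1 with hCdef
  have hCpos : 0 < C := by positivity
  have hquant : ∀ n,
      epVar (fun v => pcApprox X (N n) (t n) v - X v) p' T +
      epVar2 (fun s u => pcLift (N n) (pcApprox X (N n) (t n)) (t n) s u -
          (I u - I s - tp (X s) (X u - X s))) (p' / 2) T
      ≤ ENNReal.ofReal (C * (eps n ^ α + del n ^ α)) := by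
    intro n
    have hnn1 : (0:ℝ) ≤ eps n ^ α := Real.rpow_nonneg (heps_nonneg n) α
    have hnn2 : (0:ℝ) ≤ del n ^ α := Real.rpow_nonneg (hdel_nonneg n) α
    refine le_trans (add_le_add (hL1' n) (hL2' n)) ?_
    rw [← ENNReal.ofReal_add (mul_nonneg hC1nn hnn1)
      (mul_nonneg hM2nn (add_nonneg (mul_nonneg (by positivity) hnn1) hnn2))]
    apply ENNReal.ofReal_le_ofReal
    nlinarith [mul_nonneg hC1nn hnn2, mul_nonneg hM2nn hnn2, mul_nonneg hM2nn hnn1,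
      mul_nonneg (mul_nonneg hM2nn hB0) hnn1, mul_nonneg (mul_nonneg hM2nn hB0) hnn2,
      mul_nonneg hB0 hnn1, mul_nonneg hB0 hnn2]
  have h1t : Tendsto (fun n => eps n ^ α) atTop (nhds 0) := by
    have hc : ContinuousAt (fun x : ℝ => x ^ α) 0 :=
      Real.continuousAt_rpow_const 0 α (Or.inr hα0.le)
    have h3 := hc.tendsto.comp heps_to0
    simpa [Function.comp_def, Real.zero_rpow hα0.ne'] using h3
  have h2t : Tendsto (fun n => del n ^ α) atTop (nhds 0) := by
    have hc : ContinuousAt (fun x : ℝ => x ^ α) 0 :=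
      Real.continuousAt_rpow_const 0 α (Or.inr hα0.le)
    have h3 := hc.tendsto.comp hdel_to0
    simpa [Function.comp_def, Real.zero_rpow hα0.ne'] using h3
  have hub : Tendsto (fun n => ENNReal.ofReal (C * (eps n ^ α + del n ^ α))) atTop (nhds 0) := by
    have h3 : Tendsto (fun n => C * (eps n ^ α + del n ^ α)) atTop (nhds (C * (0 + 0))) :=
      (h1t.add h2t).const_mul C
    have h4 := (ENNReal.continuous_ofReal.tendsto _).comp h3
    simpa [Function.comp_def] using h4
  constructor
  · exact tendsto_of_tendsto_of_tendsto_of_le_of_le tendsto_const_nhds hub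
      (fun n => zero_le) (fun n => hquant n)
  · exact ⟨C, hCpos, fun n => hquant n⟩
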